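/- Let (T, S) be a labeled tree in the family 𝒯, obtained from (T', S') ∈ 𝒯 by operation 𝒪 attaching a path u_1u_2u_3u_4u_5u_6 via edge u_3v to a B-labeled vertex v of T'. Then γ_sp(T) = γ_sp(T') + 3. -/

import Mathlib

open SimpleGraph

/-- `S` is a super dominating set of `G`: every vertex `u ∉ S` has some `v ∈ S`
with `N(v) ∩ Sᶜ = {u}`. -/
def SuperDomSet {V : Type} (G : SimpleGraph V) (S : Set V) : Prop :=
  ∀ u ∈ Sᶜ, ∃ v ∈ S, G.neighborSet v ∩ Sᶜ = {u}

/-- The super domination number `γ_sp(G)`. -/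
noncomputable def superDomNum {V : Type} (G : SimpleGraph V) : ℕ :=
  sInf {n | ∃ S : Set V, SuperDomSet G S ∧ S.ncard = n}

/-- `S` is a dominating set of `G`. -/
def DomSet {V : Type} (G : SimpleGraph V) (S : Set V) : Prop :=
  ∀ u ∉ S, ∃ v ∈ S, G.Adj v u

/-- The domination number `γ(G)`. -/
noncomputable def domNum {V : Type} (G : SimpleGraph V) : ℕ :=
  sInf {n | ∃ S : Set V, DomSet G S ∧ S.ncard = n}

/-- `S` is a total dominating set of `G`: every vertex has a neighbor in `S`. -/
def TotalDomSet {V : Type} (G : SimpleGraph V) (S : Set V) : Prop :=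
  ∀ u : V, ∃ v ∈ S, G.Adj v u

/-- The total domination number `γ_t(G)`. -/
noncomputable def totalDomNum {V : Type} (G : SimpleGraph V) : ℕ :=
  sInf {n | ∃ S : Set V, TotalDomSet G S ∧ S.ncard = n}

/-- A leaf is a vertex of degree 1. -/
def IsLeaf {V : Type} (G : SimpleGraph V) (v : V) : Prop :=
  (G.neighborSet v).ncard = 1

/-- A support vertex is a vertex adjacent to a leaf. -/
def IsSupport {V : Type} (G : SimpleGraph V) (v : V) : Prop :=
  ∃ u, G.Adj v u ∧ IsLeaf G u

/-- Attach a path `u₁u₂u₃u₄u₅u₆` (indices `0,…,5`) to `G` together with the edge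
joining `u₃` (index `2`) to `v`. -/
def attachPath6 {V : Type} (G : SimpleGraph V) (v : V) : SimpleGraph (V ⊕ Fin 6) where
  Adj x y :=
    match x, y with
    | Sum.inl a, Sum.inl b => G.Adj a b
    | Sum.inl a, Sum.inr i => a = v ∧ (i : ℕ) = 2
    | Sum.inr i, Sum.inl a => a = v ∧ (i : ℕ) = 2
    | Sum.inr i, Sum.inr j => (SimpleGraph.pathGraph 6).Adj i j
  symm := by
    constructor
    rintro (a | i) (b | j) h
    · exact h.symm
    · exact h
    · exact h
    · exact (SimpleGraph.pathGraph 6).adj_symm h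
  loopless := by
    constructor
    rintro (a | i) h
    · exact G.irrefl h
    · exact (SimpleGraph.pathGraph 6).irrefl h

/-- Vertex statuses for labeled trees. -/
inductive Status : Type
  | A | B | C
deriving DecidableEq

/-- The labeling of the (attached or base) path `P₆`: statuses `C,A,B,B,A,C`. -/
def pathLabel : Fin 6 → Status := fun i =>
  if (i : ℕ) = 0 ∨ (i : ℕ) = 5 then Status.C
  else if (i : ℕ) = 1 ∨ (i : ℕ) = 4 then Status.A
  else Status.B

/-- The family 𝒯 of labeled trees: it contains `(P₆, S₀)` (leaves labeled `C`,
support vertices labeled `A`, middle vertices labeled `B`) and is closed under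
operation 𝒪: for a vertex `v` of status `B`, attach a path `u₁…u₆` by the edge
`u₃v`, labeling `u₁,…,u₆` with `C,A,B,B,A,C`. -/
inductive InT : (W : Type) → SimpleGraph W → (W → Status) → Prop
  | base : InT (Fin 6) (SimpleGraph.pathGraph 6) pathLabel
  | step {W : Type} {G : SimpleGraph W} {L : W → Status} (h : InT W G L)
      (v : W) (hv : L v = Status.B) :
      InT (W ⊕ Fin 6) (attachPath6 G v)
        (fun x => match x with | Sum.inl a => L a | Sum.inr i => pathLabel i)

section Aux
variable {V : Type} {G : SimpleGraph V} {v : V}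

lemma attach_adj_inl_inl {a b : V} :
    (attachPath6 G v).Adj (Sum.inl a) (Sum.inl b) ↔ G.Adj a b := Iff.rfl

lemma attach_adj_inl_inr {a : V} {i : Fin 6} :
    (attachPath6 G v).Adj (Sum.inl a) (Sum.inr i) ↔ a = v ∧ (i : ℕ) = 2 := Iff.rfl

lemma attach_adj_inr_inl {a : V} {i : Fin 6} :
    (attachPath6 G v).Adj (Sum.inr i) (Sum.inl a) ↔ a = v ∧ (i : ℕ) = 2 := Iff.rfl

lemma attach_adj_inr_inr {i j : Fin 6} :
    (attachPath6 G v).Adj (Sum.inr i) (Sum.inr j) ↔ (i:ℕ)+1 = j ∨ (j:ℕ)+1 = i := pathGraph_adj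

end Aux

lemma superdom_univ {V : Type} (G : SimpleGraph V) : SuperDomSet G Set.univ := by
  intro u hu; simp at hu

lemma superdom_nonempty {V : Type} (G : SimpleGraph V) :
    {n | ∃ S : Set V, SuperDomSet G S ∧ S.ncard = n}.Nonempty :=
  ⟨_, Set.univ, superdom_univ G, rfl⟩

lemma three_le_ncard {α : Type} [Finite α] {B : Set α} {x y z : α}
    (hx : x ∈ B) (hy : y ∈ B) (hz : z ∈ B) (hxy : x ≠ y) (hxz : x ≠ z) (hyz : y ≠ z) :
    3 ≤ B.ncard := by
  have h3 : ({x, y, z} : Set α).ncard = 3 := by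
    rw [Set.ncard_insert_of_notMem (by simp [hxy, hxz]),
        Set.ncard_insert_of_notMem (by simp [hyz]), Set.ncard_singleton]
  calc 3 = ({x, y, z} : Set α).ncard := h3.symm
    _ ≤ B.ncard := Set.ncard_le_ncard (by simp [Set.insert_subset_iff, hx, hy, hz]) B.toFinite

lemma four_le_ncard {α : Type} [Finite α] {B : Set α} {x y z w : α}
    (hx : x ∈ B) (hy : y ∈ B) (hz : z ∈ B) (hw : w ∈ B)
    (hxy : x ≠ y) (hxz : x ≠ z) (hxw : x ≠ w) (hyz : y ≠ z) (hyw : y ≠ w) (hzw : z ≠ w) :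
    4 ≤ B.ncard := by
  have h4 : ({x, y, z, w} : Set α).ncard = 4 := by
    rw [Set.ncard_insert_of_notMem (by simp [hxy, hxz, hxw]),
        Set.ncard_insert_of_notMem (by simp [hyz, hyw]),
        Set.ncard_insert_of_notMem (by simp [hzw]), Set.ncard_singleton]
  calc 4 = ({x, y, z, w} : Set α).ncard := h4.symm
    _ ≤ B.ncard := Set.ncard_le_ncard
        (by simp [Set.insert_subset_iff, hx, hy, hz, hw]) B.toFinite

lemma ncard_union_triple {V : Type} [Finite V] (S : Set V) (i j k : Fin 6)
    (hij : i ≠ j) (hik : i ≠ k) (hjk : j ≠ k) :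
    (Sum.inl '' S ∪ {Sum.inr i, Sum.inr j, Sum.inr k} : Set (V ⊕ Fin 6)).ncard
      = S.ncard + 3 := by
  rw [Set.ncard_union_eq (by simp [Set.disjoint_left]) (Set.toFinite _) (Set.toFinite _),
      Set.ncard_image_of_injective _ Sum.inl_injective]
  congr 1
  rw [Set.ncard_insert_of_notMem (by simp [hij, hik]),
      Set.ncard_insert_of_notMem (by simp [hjk]), Set.ncard_singleton]

lemma superDomNum_attach_le {V : Type} [Finite V] (G : SimpleGraph V) (v : V) :
    superDomNum (attachPath6 G v) ≤ superDomNum G + 3 := by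
  obtain ⟨S, hS, hcard⟩ := Nat.sInf_mem (superdom_nonempty G)
  by_cases hvS : v ∈ S
  · -- use {inr 1, inr 2, inr 5}
    set S2 : Set (V ⊕ Fin 6) := Sum.inl '' S ∪ {Sum.inr 1, Sum.inr 2, Sum.inr 5} with hS2
    have hsuper : SuperDomSet (attachPath6 G v) S2 := by
      rintro (a | i) hu
      · have ha : a ∉ S := by
          intro h; exact hu (Or.inl ⟨a, h, rfl⟩)
        obtain ⟨b, hbS, hb⟩ := hS a ha
        refine ⟨Sum.inl b, Or.inl ⟨b, hbS, rfl⟩, ?_⟩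
        ext (c | j)
        · have := Set.ext_iff.mp hb c
          simp only [Set.mem_inter_iff, mem_neighborSet, Set.mem_compl_iff,
            Set.mem_singleton_iff] at this ⊢
          simp only [attach_adj_inl_inl, hS2, Set.mem_union, Set.mem_image,
            Sum.inl.injEq, Set.mem_insert_iff, Set.mem_singleton_iff,
            reduceCtorEq, or_false, exists_eq_right]
          constructor
          · rintro ⟨h1, h2⟩; exact this.mp ⟨h1, h2⟩
          · rintro rfl; exact this.mpr rfl
        · simp only [Set.mem_inter_iff, mem_neighborSet, Set.mem_compl_iff,
            Set.mem_singleton_iff, attach_adj_inl_inr, reduceCtorEq, iff_false]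
          rintro ⟨⟨rfl, hj⟩, hmem⟩
          apply hmem
          have hj2 : j = 2 := Fin.ext (by simpa using hj)
          subst hj2
          simp [hS2]
      · have hi : i ≠ 1 ∧ i ≠ 2 ∧ i ≠ 5 := by
          refine ⟨?_, ?_, ?_⟩ <;> (rintro rfl; exact hu (by simp [hS2]))
        fin_cases i
        · -- i = 0, witness inr 1
          refine ⟨Sum.inr 1, by simp [hS2], ?_⟩
          ext (c | j)
          · simp only [Set.mem_inter_iff, mem_neighborSet, Set.mem_compl_iff,
              Set.mem_singleton_iff, attach_adj_inr_inl, reduceCtorEq, iff_false]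
            rintro ⟨⟨rfl, h2⟩, hmem⟩
            exact absurd h2 (by decide)
          · fin_cases j <;>
              simp [hS2, attach_adj_inr_inr, Fin.ext_iff] <;> decide
        · simp at hi
        · simp at hi
        · -- i = 3, witness inr 2
          refine ⟨Sum.inr 2, by simp [hS2], ?_⟩
          ext (c | j)
          · simp only [Set.mem_inter_iff, mem_neighborSet, Set.mem_compl_iff,
              Set.mem_singleton_iff, attach_adj_inr_inl, reduceCtorEq, iff_false]
            rintro ⟨⟨rfl, -⟩, hmem⟩
            exact hmem (Or.inl ⟨_, hvS, rfl⟩)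
          · fin_cases j <;>
              simp [hS2, attach_adj_inr_inr, Fin.ext_iff] <;> decide
        · -- i = 4, witness inr 5
          refine ⟨Sum.inr 5, by simp [hS2], ?_⟩
          ext (c | j)
          · simp only [Set.mem_inter_iff, mem_neighborSet, Set.mem_compl_iff,
              Set.mem_singleton_iff, attach_adj_inr_inl, reduceCtorEq, iff_false]
            rintro ⟨⟨rfl, h2⟩, hmem⟩
            exact absurd h2 (by decide)
          · fin_cases j <;>
              simp [hS2, attach_adj_inr_inr, Fin.ext_iff] <;> decide
        · simp at hi
    calc superDomNum (attachPath6 G v) ≤ S2.ncard := Nat.sInf_le ⟨S2, hsuper, rfl⟩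
      _ = S.ncard + 3 := ncard_union_triple S 1 2 5 (by decide) (by decide) (by decide)
      _ = superDomNum G + 3 := by rw [hcard]; rfl
  · -- v ∉ S : use {inr 0, inr 3, inr 4}
    set S2 : Set (V ⊕ Fin 6) := Sum.inl '' S ∪ {Sum.inr 0, Sum.inr 3, Sum.inr 4} with hS2
    have hsuper : SuperDomSet (attachPath6 G v) S2 := by
      rintro (a | i) hu
      · have ha : a ∉ S := by
          intro h; exact hu (Or.inl ⟨a, h, rfl⟩)
        obtain ⟨b, hbS, hb⟩ := hS a ha
        have hbv : b ≠ v := by rintro rfl; exact hvS hbS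
        refine ⟨Sum.inl b, Or.inl ⟨b, hbS, rfl⟩, ?_⟩
        ext (c | j)
        · have := Set.ext_iff.mp hb c
          simp only [Set.mem_inter_iff, mem_neighborSet, Set.mem_compl_iff,
            Set.mem_singleton_iff] at this ⊢
          simp only [attach_adj_inl_inl, hS2, Set.mem_union, Set.mem_image,
            Sum.inl.injEq, Set.mem_insert_iff, Set.mem_singleton_iff,
            reduceCtorEq, or_false, exists_eq_right]
          constructor
          · rintro ⟨h1, h2⟩; exact this.mp ⟨h1, h2⟩
          · rintro rfl; exact this.mpr rfl
        · simp only [Set.mem_inter_iff, mem_neighborSet, Set.mem_compl_iff,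
            Set.mem_singleton_iff, attach_adj_inl_inr, reduceCtorEq, iff_false]
          rintro ⟨⟨rfl, -⟩, -⟩
          exact hbv rfl
      · have hi : i ≠ 0 ∧ i ≠ 3 ∧ i ≠ 4 := by
          refine ⟨?_, ?_, ?_⟩ <;> (rintro rfl; exact hu (by simp [hS2]))
        fin_cases i
        · simp at hi
        · -- i = 1, witness inr 0
          refine ⟨Sum.inr 0, by simp [hS2], ?_⟩
          ext (c | j)
          · simp only [Set.mem_inter_iff, mem_neighborSet, Set.mem_compl_iff,
              Set.mem_singleton_iff, attach_adj_inr_inl, reduceCtorEq, iff_false]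
            rintro ⟨⟨rfl, h2⟩, hmem⟩
            exact absurd h2 (by decide)
          · fin_cases j <;>
              simp [hS2, attach_adj_inr_inr, Fin.ext_iff] <;> decide
        · -- i = 2, witness inr 3
          refine ⟨Sum.inr 3, by simp [hS2], ?_⟩
          ext (c | j)
          · simp only [Set.mem_inter_iff, mem_neighborSet, Set.mem_compl_iff,
              Set.mem_singleton_iff, attach_adj_inr_inl, reduceCtorEq, iff_false]
            rintro ⟨⟨rfl, h2⟩, hmem⟩
            exact absurd h2 (by decide)
          · fin_cases j <;>
              simp [hS2, attach_adj_inr_inr, Fin.ext_iff] <;> decide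
        · simp at hi
        · simp at hi
        · -- i = 5, witness inr 4
          refine ⟨Sum.inr 4, by simp [hS2], ?_⟩
          ext (c | j)
          · simp only [Set.mem_inter_iff, mem_neighborSet, Set.mem_compl_iff,
              Set.mem_singleton_iff, attach_adj_inr_inl, reduceCtorEq, iff_false]
            rintro ⟨⟨rfl, h2⟩, hmem⟩
            exact absurd h2 (by decide)
          · fin_cases j <;>
              simp [hS2, attach_adj_inr_inr, Fin.ext_iff] <;> decide
    calc superDomNum (attachPath6 G v) ≤ S2.ncard := Nat.sInf_le ⟨S2, hsuper, rfl⟩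
      _ = S.ncard + 3 := ncard_union_triple S 0 3 4 (by decide) (by decide) (by decide)
      _ = superDomNum G + 3 := by rw [hcard]; rfl

lemma superDomNum_attach_ge {V : Type} [Finite V] (G : SimpleGraph V) (v : V) :
    superDomNum G + 3 ≤ superDomNum (attachPath6 G v) := by
  obtain ⟨S, hS, hcard⟩ := Nat.sInf_mem (superdom_nonempty (attachPath6 G v))
  set SW : Set V := Sum.inl ⁻¹' S with hSWdef
  -- adjacency extraction from a witness equation
  have adj_of_eq : ∀ (w u : V ⊕ Fin 6), (attachPath6 G v).neighborSet w ∩ Sᶜ = {u} →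
      (attachPath6 G v).Adj w u := by
    intro w u heq
    have : u ∈ (attachPath6 G v).neighborSet w ∩ Sᶜ := by rw [heq]; exact rfl
    exact this.1
  -- c1 : one of u1, u2 is in S
  have c1 : Sum.inr 0 ∈ S ∨ Sum.inr 1 ∈ S := by
    by_contra hcon
    push_neg at hcon
    obtain ⟨w, hw, hweq⟩ := hS (Sum.inr 0) hcon.1
    have hadj := adj_of_eq w _ hweq
    rcases w with a | j
    · exact absurd hadj.2 (by decide)
    · rw [attach_adj_inr_inr] at hadj
      have : j = 1 := Fin.ext (by omega)
      subst this
      exact hcon.2 hw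
  -- c3 : one of u5, u6 is in S
  have c3 : Sum.inr 4 ∈ S ∨ Sum.inr 5 ∈ S := by
    by_contra hcon
    push_neg at hcon
    obtain ⟨w, hw, hweq⟩ := hS (Sum.inr 5) hcon.2
    have hadj := adj_of_eq w _ hweq
    rcases w with a | j
    · exact absurd hadj.2 (by decide)
    · rw [attach_adj_inr_inr] at hadj
      have : j = 4 := Fin.ext (by omega)
      subst this
      exact hcon.1 hw
  -- c2
  have c2 : Sum.inr 2 ∈ S ∨ Sum.inr 3 ∈ S ∨ (Sum.inr 4 ∈ S ∧ Sum.inr 5 ∈ S) := by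
    by_cases h2 : Sum.inr 2 ∈ S
    · exact Or.inl h2
    by_cases h3 : Sum.inr 3 ∈ S
    · exact Or.inr (Or.inl h3)
    obtain ⟨w, hw, hweq⟩ := hS (Sum.inr 3) h3
    have hadj := adj_of_eq w _ hweq
    rcases w with a | j
    · exact absurd hadj.2 (by decide)
    · rw [attach_adj_inr_inr] at hadj
      have hj : j = 2 ∨ j = 4 := by
        rcases hadj with h | h
        · left; exact Fin.ext (by omega)
        · right; exact Fin.ext (by omega)
      rcases hj with rfl | rfl
      · exact absurd hw h2
      · refine Or.inr (Or.inr ⟨hw, ?_⟩)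
        by_contra h5
        have : Sum.inr 5 ∈ (attachPath6 G v).neighborSet (Sum.inr 4) ∩ Sᶜ :=
          ⟨by rw [mem_neighborSet, attach_adj_inr_inr]; decide, h5⟩
        rw [hweq] at this
        exact absurd this (by simp)
  -- key extraction lemma
  have key : ∀ b u : V, (attachPath6 G v).neighborSet (Sum.inl b) ∩ Sᶜ = {Sum.inl u} →
      G.neighborSet b ∩ SWᶜ = {u} := by
    intro b u heq
    ext x
    have := Set.ext_iff.mp heq (Sum.inl x)
    simp only [Set.mem_inter_iff, mem_neighborSet, Set.mem_compl_iff, Set.mem_singleton_iff,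
      attach_adj_inl_inl, Sum.inl.injEq] at this
    simpa [Set.mem_inter_iff, Set.mem_compl_iff, hSWdef] using this
  -- every non-member of SW other than v has an inl-witness
  have inlwit : ∀ u : V, u ∉ SW → u ≠ v → ∃ b ∈ SW, G.neighborSet b ∩ SWᶜ = {u} := by
    intro u huS huv
    obtain ⟨w, hw, hweq⟩ := hS (Sum.inl u) huS
    have hadj := adj_of_eq w _ hweq
    rcases w with b | j
    · exact ⟨b, hw, key b u hweq⟩
    · exact absurd hadj.1 huv
  -- decomposition of the cardinality of S
  have hsplit : S = (S ∩ Set.range Sum.inl) ∪ (S ∩ Set.range Sum.inr) := by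
    rw [← Set.inter_union_distrib_left, Set.range_inl_union_range_inr, Set.inter_univ]
  have hdis : Disjoint (S ∩ Set.range Sum.inl) (S ∩ Set.range Sum.inr) :=
    Set.isCompl_range_inl_range_inr.disjoint.mono Set.inter_subset_right Set.inter_subset_right
  have hdecomp : (S ∩ Set.range Sum.inl).ncard + (S ∩ Set.range Sum.inr).ncard = S.ncard := by
    rw [← Set.ncard_union_eq hdis (Set.toFinite _) (Set.toFinite _), ← hsplit]
  have hA : (S ∩ Set.range Sum.inl).ncard = SW.ncard := by
    have himg : S ∩ Set.range Sum.inl = Sum.inl '' SW := by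
      ext x
      rcases x with a | i
      · simp [hSWdef]
      · simp [hSWdef]
    rw [himg, Set.ncard_image_of_injective _ Sum.inl_injective]
  have hcard' : S.ncard = superDomNum (attachPath6 G v) := hcard
  have hmemB : ∀ i : Fin 6, Sum.inr i ∈ S → Sum.inr i ∈ S ∩ Set.range Sum.inr :=
    fun i hi => ⟨hi, i, rfl⟩
  -- main case split
  by_cases hbad : v ∉ SW ∧ ∀ b ∈ SW, G.neighborSet b ∩ SWᶜ ≠ {v}
  · -- bad case : v's witness is inr 2, so inr 1, inr 2, inr 3 ∈ S
    obtain ⟨hvS, hnowit⟩ := hbad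
    obtain ⟨w, hw, hweq⟩ := hS (Sum.inl v) hvS
    have hadj := adj_of_eq w _ hweq
    rcases w with b | j
    · exact absurd (key b v hweq) (hnowit b hw)
    · have hj : j = 2 := Fin.ext (by simpa using hadj.2)
      subst hj
      have h1 : Sum.inr 1 ∈ S := by
        by_contra h1
        have : Sum.inr 1 ∈ (attachPath6 G v).neighborSet (Sum.inr 2) ∩ Sᶜ :=
          ⟨by rw [mem_neighborSet, attach_adj_inr_inr]; decide, h1⟩
        rw [hweq] at this
        exact absurd this (by simp)
      have h3 : Sum.inr 3 ∈ S := by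
        by_contra h3
        have : Sum.inr 3 ∈ (attachPath6 G v).neighborSet (Sum.inr 2) ∩ Sᶜ :=
          ⟨by rw [mem_neighborSet, attach_adj_inr_inr]; decide, h3⟩
        rw [hweq] at this
        exact absurd this (by simp)
      -- fourth element from c3
      have hB4 : 4 ≤ (S ∩ Set.range Sum.inr).ncard := by
        rcases c3 with h45 | h45
        · exact four_le_ncard (hmemB 1 h1) (hmemB 2 hw) (hmemB 3 h3) (hmemB 4 h45)
            (by simp) (by simp) (by simp) (by simp) (by simp) (by simp)
        · exact four_le_ncard (hmemB 1 h1) (hmemB 2 hw) (hmemB 3 h3) (hmemB 5 h45)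
            (by simp) (by simp) (by simp) (by simp) (by simp) (by simp)
      -- insert v SW is a super dominating set of G
      have hsuper : SuperDomSet G (insert v SW) := by
        intro u hu
        have huv : u ≠ v ∧ u ∉ SW := by
          constructor
          · rintro rfl; exact hu (Set.mem_insert _ _)
          · intro h; exact hu (Set.mem_insert_of_mem _ h)
        obtain ⟨b, hb, hbeq⟩ := inlwit u huv.2 huv.1
        refine ⟨b, Set.mem_insert_of_mem _ hb, ?_⟩
        ext x
        have hx := Set.ext_iff.mp hbeq x
        simp only [Set.mem_inter_iff, mem_neighborSet, Set.mem_compl_iff,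
          Set.mem_singleton_iff] at hx ⊢
        simp only [Set.mem_insert_iff, not_or]
        constructor
        · rintro ⟨ha, -, hsw⟩; exact hx.mp ⟨ha, hsw⟩
        · rintro rfl
          obtain ⟨ha, hsw⟩ := hx.mpr rfl
          exact ⟨ha, huv.1, hsw⟩
      have hle : superDomNum G ≤ SW.ncard + 1 :=
        le_trans (Nat.sInf_le ⟨insert v SW, hsuper, rfl⟩) (Set.ncard_insert_le _ _)
      omega
  · -- good case : SW is a super dominating set of G
    have hsuper : SuperDomSet G SW := by
      intro u hu
      by_cases huv : u = v
      · subst huv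
        push_neg at hbad
        obtain ⟨b, hb, hbeq⟩ := hbad hu
        exact ⟨b, hb, hbeq⟩
      · exact inlwit u hu huv
    have hB3 : 3 ≤ (S ∩ Set.range Sum.inr).ncard := by
      rcases c1 with h01 | h01 <;> rcases c3 with h45 | h45 <;>
        rcases c2 with h2 | h2 | h2
      all_goals first
        | exact three_le_ncard (hmemB 0 h01) (hmemB 2 h2) (hmemB 4 h45)
            (by simp) (by simp) (by simp)
        | exact three_le_ncard (hmemB 0 h01) (hmemB 3 h2) (hmemB 4 h45)
            (by simp) (by simp) (by simp)
        | exact three_le_ncard (hmemB 0 h01) (hmemB 2 h2) (hmemB 5 h45)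
            (by simp) (by simp) (by simp)
        | exact three_le_ncard (hmemB 0 h01) (hmemB 3 h2) (hmemB 5 h45)
            (by simp) (by simp) (by simp)
        | exact three_le_ncard (hmemB 0 h01) (hmemB 4 h2.1) (hmemB 5 h2.2)
            (by simp) (by simp) (by simp)
        | exact three_le_ncard (hmemB 1 h01) (hmemB 2 h2) (hmemB 4 h45)
            (by simp) (by simp) (by simp)
        | exact three_le_ncard (hmemB 1 h01) (hmemB 3 h2) (hmemB 4 h45)
            (by simp) (by simp) (by simp)
        | exact three_le_ncard (hmemB 1 h01) (hmemB 2 h2) (hmemB 5 h45)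
            (by simp) (by simp) (by simp)
        | exact three_le_ncard (hmemB 1 h01) (hmemB 3 h2) (hmemB 5 h45)
            (by simp) (by simp) (by simp)
        | exact three_le_ncard (hmemB 1 h01) (hmemB 4 h2.1) (hmemB 5 h2.2)
            (by simp) (by simp) (by simp)
    have hle : superDomNum G ≤ SW.ncard := Nat.sInf_le ⟨SW, hsuper, rfl⟩
    omega

lemma InT_finite {W : Type} {G : SimpleGraph W} {L : W → Status} (h : InT W G L) :
    Finite W := by
  induction h with
  | base => exact inferInstance
  | step h v hv ih => haveI := ih; exact inferInstance

/-- If `(T, S) ∈ 𝒯` is obtained from `(T', S') ∈ 𝒯` by operation 𝒪 applied at a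
`B`-labeled vertex `v`, then `γ_sp(T) = γ_sp(T') + 3`. -/
theorem superDomNum_attachPath6 {W : Type} {G : SimpleGraph W} {L : W → Status}
    (h : InT W G L) (v : W) (hv : L v = Status.B) :
    superDomNum (attachPath6 G v) = superDomNum G + 3 := by
  have : Finite W := InT_finite h
  exact le_antisymm (superDomNum_attach_le G v) (superDomNum_attach_ge G v)
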